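/- Let G be a finite simple graph with an enumeration N = (v_1, ..., v_s) of its vertices, and let k be a positive integer. If G contains no pair of k-secant edges with respect to N, then G has a vertex of degree at most 2k. -/
import Mathlib


def HasKSecantEdges {s : ℕ} (G : SimpleGraph (Fin s)) (k : ℕ) : Prop :=
  ∃ i r j l : Fin s, i < r ∧ r < j ∧ j < l ∧ G.Adj i j ∧ G.Adj r l ∧ k ≤ j.val - r.val

/-- Every vertex of degree at least `2k+1` has a "long" incident edge,
i.e. a neighbor at distance more than `k` in the enumeration. -/
lemma exists_long_edge {s k : ℕ} (G : SimpleGraph (Fin s)) [DecidableRel G.Adj]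
    (v : Fin s) (hd : 2 * k + 1 ≤ G.degree v) :
    ∃ u : Fin s, G.Adj v u ∧ (u.val + k < v.val ∨ v.val + k < u.val) := by
  by_contra hc
  push_neg at hc
  have hsub : (G.neighborFinset v).image Fin.val ⊆
      (Finset.Icc (v.val - k) (v.val + k)).erase v.val := by
    intro x hx
    rw [Finset.mem_image] at hx
    obtain ⟨u, hu, rfl⟩ := hx
    rw [SimpleGraph.mem_neighborFinset] at hu
    obtain ⟨h1, h2⟩ := hc u hu
    have hne : u.val ≠ v.val := by
      intro hval
      exact G.ne_of_adj hu (Fin.ext hval.symm)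
    rw [Finset.mem_erase, Finset.mem_Icc]
    exact ⟨hne, by omega, by omega⟩
  have hcard := Finset.card_le_card hsub
  rw [Finset.card_image_of_injective _ Fin.val_injective] at hcard
  have hmem : v.val ∈ Finset.Icc (v.val - k) (v.val + k) := by
    rw [Finset.mem_Icc]; omega
  have hca := Finset.card_erase_of_mem hmem
  have hIcc : (Finset.Icc (v.val - k) (v.val + k)).card = v.val + k + 1 - (v.val - k) :=
    Nat.card_Icc _ _
  have hdeg : G.degree v = (G.neighborFinset v).card := rfl
  omega

theorem no_secant_small_degree_vertex {s k : ℕ} (hk : 0 < k) (hs : 0 < s)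
    (G : SimpleGraph (Fin s)) [DecidableRel G.Adj] (h : ¬ HasKSecantEdges G k) :
    ∃ v : Fin s, G.degree v ≤ 2 * k := by
  classical
  by_contra hcon
  push_neg at hcon
  have hdeg : ∀ v : Fin s, 2 * k + 1 ≤ G.degree v := fun v => hcon v
  -- S : set of right endpoints of long edges
  set S : Finset (Fin s) :=
    Finset.univ.filter (fun w => ∃ u : Fin s, G.Adj u w ∧ u.val + k < w.val) with hSdef
  have hSmem : ∀ w : Fin s, w ∈ S ↔ ∃ u : Fin s, G.Adj u w ∧ u.val + k < w.val := by
    intro w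
    rw [hSdef, Finset.mem_filter]
    simp
  have hSne : S.Nonempty := by
    obtain ⟨u, hu, hd⟩ := exists_long_edge G ⟨0, hs⟩ (hdeg _)
    rcases hd with h1 | h2
    · simp at h1
    · exact ⟨u, (hSmem u).mpr ⟨⟨0, hs⟩, hu, by simpa using h2⟩⟩
  set b : Fin s := S.min' hSne with hbdef
  have hbS := S.min'_mem hSne
  rw [hSmem] at hbS
  obtain ⟨a0, ha0b, ha0lt⟩ := hbS
  -- T : left endpoints of long edges ending at b
  set T : Finset (Fin s) :=
    Finset.univ.filter (fun u => G.Adj u b ∧ u.val + k < b.val) with hTdef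
  have hTmem : ∀ u : Fin s, u ∈ T ↔ G.Adj u b ∧ u.val + k < b.val := by
    intro u
    rw [hTdef, Finset.mem_filter]
    simp
  have hTne : T.Nonempty := ⟨a0, (hTmem a0).mpr ⟨ha0b, ha0lt⟩⟩
  set a : Fin s := T.max' hTne with hadef
  have haT := T.max'_mem hTne
  rw [hTmem] at haT
  obtain ⟨hab, halt⟩ := haT
  have hbs : b.val < s := b.isLt
  have hc1 : a.val + 1 < s := by omega
  set c : Fin s := ⟨a.val + 1, hc1⟩ with hcdef
  have hcval : c.val = a.val + 1 := rfl
  obtain ⟨u, hcu, hdisj⟩ := exists_long_edge G c (hdeg c)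
  rcases hdisj with h1 | h2
  · -- long edge ending at c : contradicts minimality of b
    have hcS : c ∈ S := (hSmem c).mpr ⟨u, hcu.symm, h1⟩
    have hle : b.val ≤ c.val := Fin.le_def.mp (S.min'_le c hcS)
    omega
  · rcases lt_trichotomy u.val b.val with h3 | h3 | h3
    · -- long edge ending at u < b : contradicts minimality of b
      have huS : u ∈ S := (hSmem u).mpr ⟨c, hcu, h2⟩
      have hle : b.val ≤ u.val := Fin.le_def.mp (S.min'_le u huS)
      omega
    · -- u = b : contradicts maximality of a
      have hub : u = b := Fin.ext h3
      have hcT : c ∈ T := (hTmem c).mpr ⟨hub ▸ hcu, by omega⟩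
      have hle : c.val ≤ a.val := Fin.le_def.mp (T.le_max' c hcT)
      omega
    · -- u > b : the edges (a,b) and (c,u) are k-secant
      exact h ⟨a, c, b, u, by rw [Fin.lt_def]; omega, by rw [Fin.lt_def]; omega,
        by rw [Fin.lt_def]; omega, hab, hcu, by omega⟩
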